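/- For every fixed r ∈ (0,1) there exists N₀ (one may take any integer N₀ > 3r/(1-r) + 2) such that for all integers N ≥ N₀, all α > 0 and all β with 0 ≤ β ≤ α/(N-1), the VSA expected receptive radius is strictly smaller than the SSA expected receptive radius: μ(P_{N,r}) < μ(Q_{N,α,β}). -/
import Mathlib

set_option maxHeartbeats 1000000

open Finset

lemma sum_range_cast_id (N : ℕ) : ∑ Δ ∈ range N, (Δ : ℝ) = N * ((N : ℝ) - 1) / 2 := by
  induction N with
  | zero => simp
  | succ n ih => rw [Finset.sum_range_succ, ih]; push_cast; ring

lemma sum_range_cast_sq (N : ℕ) :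
    ∑ Δ ∈ range N, (Δ : ℝ) ^ 2 = N * ((N : ℝ) - 1) * (2 * N - 1) / 6 := by
  induction N with
  | zero => simp
  | succ n ih => rw [Finset.sum_range_succ, ih]; push_cast; ring

lemma sum_geom_deriv (r : ℝ) (N : ℕ) :
    (∑ Δ ∈ range N, (Δ : ℝ) * r ^ Δ) * (1 - r) ^ 2
      = r - N * r ^ N + ((N : ℝ) - 1) * r ^ (N + 1) := by
  induction N with
  | zero => norm_num
  | succ n ih =>
      rw [Finset.sum_range_succ, add_mul, ih]
      push_cast
      ring

/-- For every fixed `r ∈ (0,1)`, any integer `N₀ > 3r/(1-r) + 2` works: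
for all `N ≥ N₀`, all `α > 0` and all `β ∈ [0, α/(N-1)]`, the VSA expected receptive radius
is strictly smaller than the SSA expected receptive radius: `μ(P_{N,r}) < μ(Q_{N,α,β})`. -/
theorem vsa_recRadius_lt_ssa (r : ℝ) (hr : r ∈ Set.Ioo (0 : ℝ) 1) :
    ∃ N₀ : ℕ, (3 * r / (1 - r) + 2 < (N₀ : ℝ)) ∧
      ∀ N₀' : ℕ, 3 * r / (1 - r) + 2 < (N₀' : ℝ) →
        ∀ N : ℕ, N₀' ≤ N →
          ∀ α β : ℝ, 0 < α → 0 ≤ β → β ≤ α / ((N : ℝ) - 1) →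
            ∑ Δ ∈ Finset.range N, (Δ : ℝ) * ((1 - r) * r ^ Δ / (1 - r ^ N)) <
              ∑ Δ ∈ Finset.range N,
                (Δ : ℝ) * ((α - β * Δ) / (α * N - β * N * ((N : ℝ) - 1) / 2)) := by
  obtain ⟨hr0, hr1⟩ := hr
  have h1r : 0 < 1 - r := by linarith
  obtain ⟨N₀, hN₀⟩ := exists_nat_gt (3 * r / (1 - r) + 2)
  refine ⟨N₀, hN₀, ?_⟩
  intro N₀' hN₀' N hN α β hα hβ hβα
  have hNcast : (N₀' : ℝ) ≤ (N : ℝ) := by exact_mod_cast hN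
  have hNreal : 3 * r / (1 - r) + 2 < (N : ℝ) := lt_of_lt_of_le hN₀' hNcast
  have hN2 : (2 : ℝ) < (N : ℝ) := by
    have : 0 ≤ 3 * r / (1 - r) := by positivity
    linarith
  have hN3 : (3 : ℝ) ≤ (N : ℝ) := by
    have h2 : 2 < N := by exact_mod_cast hN2
    exact_mod_cast h2
  have hNne : N ≠ 0 := by
    intro h; rw [h] at hN2; norm_num at hN2
  have hN1 : 0 < (N : ℝ) - 1 := by linarith
  have hβN : β * ((N : ℝ) - 1) ≤ α := by
    have := (le_div_iff₀ hN1).mp hβα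
    linarith
  have hrN1 : r ^ N < 1 := pow_lt_one₀ hr0.le hr1 hNne
  have h1rN : 0 < 1 - r ^ N := by linarith
  have hS : 0 < α * N - β * N * ((N : ℝ) - 1) / 2 := by
    nlinarith [mul_le_mul_of_nonneg_left hβN (show (0:ℝ) ≤ (N : ℝ) / 2 by positivity)]
  set T : ℝ := ∑ Δ ∈ range N, (Δ : ℝ) * r ^ Δ with hTdef
  have hT : T * (1 - r) ^ 2 = r - N * r ^ N + ((N : ℝ) - 1) * (r ^ N * r) := by
    rw [hTdef, sum_geom_deriv r N, pow_succ]
  have hTnn : 0 ≤ T := Finset.sum_nonneg fun i _ => by positivity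
  have hL : ∑ Δ ∈ Finset.range N, (Δ : ℝ) * ((1 - r) * r ^ Δ / (1 - r ^ N))
      = (1 - r) * T / (1 - r ^ N) := by
    rw [hTdef, Finset.mul_sum, Finset.sum_div]
    exact Finset.sum_congr rfl fun i _ => by ring
  have hR : ∑ Δ ∈ Finset.range N, (Δ : ℝ) * ((α - β * Δ) / (α * N - β * N * ((N : ℝ) - 1) / 2))
      = (α * (N * ((N : ℝ) - 1) / 2) - β * (N * ((N : ℝ) - 1) * (2 * N - 1) / 6))
        / (α * N - β * N * ((N : ℝ) - 1) / 2) := by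
    rw [← sum_range_cast_id N, ← sum_range_cast_sq N, Finset.mul_sum, Finset.mul_sum,
      ← Finset.sum_sub_distrib, Finset.sum_div]
    exact Finset.sum_congr rfl fun i _ => by ring
  rw [hL, hR]
  have hpow : r ^ (N + 1) ≤ r ^ N := by
    rw [pow_succ]
    nlinarith [pow_nonneg hr0.le N]
  have stepA : (1 - r) * T / (1 - r ^ N) ≤ r / (1 - r) := by
    rw [div_le_div_iff₀ h1rN h1r]
    have h5 : (N : ℝ) * (r ^ N * r) ≤ (N : ℝ) * r ^ N := by
      nlinarith [mul_nonneg (Nat.cast_nonneg (α := ℝ) N)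
        (mul_nonneg (pow_nonneg hr0.le N) h1r.le)]
    nlinarith [hT, h5]
  have stepB : r / (1 - r) < ((N : ℝ) - 2) / 3 := by
    rw [div_lt_div_iff₀ h1r (by norm_num : (0:ℝ) < 3)]
    have h3 : 3 * r / (1 - r) < (N : ℝ) - 2 := by linarith
    have := (div_lt_iff₀ h1r).mp h3
    linarith
  have stepC : ((N : ℝ) - 2) / 3 ≤
      (α * (N * ((N : ℝ) - 1) / 2) - β * (N * ((N : ℝ) - 1) * (2 * N - 1) / 6))
        / (α * N - β * N * ((N : ℝ) - 1) / 2) := by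
    rw [div_le_div_iff₀ (by norm_num : (0:ℝ) < 3) hS]
    have key : 0 ≤ ((N : ℝ) * ((N : ℝ) + 1) / 2) * (α - β * ((N : ℝ) - 1)) :=
      mul_nonneg (by positivity) (by linarith)
    linarith [key]
  calc (1 - r) * T / (1 - r ^ N) ≤ r / (1 - r) := stepA
    _ < ((N : ℝ) - 2) / 3 := stepB
    _ ≤ _ := stepC
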